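/- Let m > 0 and r₀ > 2·m, and let N : (r₀, ∞) → ℝ be twice differentiable with N(r) > 0 for all r, satisfying N(r)·N''(r) + 2·N(r)·N'(r)/r + N'(r)² = 0 for all r ∈ (r₀, ∞), N(r) → 1 as r → ∞, and N(r) → √(1 − 2·m/r₀) as r → r₀⁺. Then N(r) = √(1 − 2·m/r) for all r ∈ (r₀, ∞). -/

import Mathlib

open Filter Topology

lemma const_on_Ioi_aux {f : ℝ → ℝ} {a : ℝ}
    (hf : ∀ x ∈ Set.Ioi a, DifferentiableAt ℝ f x)
    (hf' : ∀ x ∈ Set.Ioi a, deriv f x = 0)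
    {x y : ℝ} (hx : x ∈ Set.Ioi a) (hy : y ∈ Set.Ioi a) : f x = f y := by
  have h := Convex.norm_image_sub_le_of_norm_deriv_le (C := 0) hf
    (fun z hz => by simp [hf' z hz]) (convex_Ioi a) hx hy
  have h0 : ‖f y - f x‖ ≤ 0 := by simpa using h
  have := norm_le_zero_iff.mp h0
  have : f y - f x = 0 := this
  linarith

/-- Uniqueness of the Schwarzschild lapse: a positive solution of
`N·N'' + 2·N·N'/r + (N')² = 0` on `(r₀, ∞)` with `N → 1` at infinity and
`N → √(1 − 2m/r₀)` at `r₀` is the Schwarzschild lapse `N(r) = √(1 − 2m/r)`. -/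
theorem schwarzschild_lapse_uniqueness
    (m r₀ : ℝ) (hm : 0 < m) (hr₀ : 2 * m < r₀) (N : ℝ → ℝ)
    (hN : ∀ r ∈ Set.Ioi r₀, DifferentiableAt ℝ N r)
    (hN' : ∀ r ∈ Set.Ioi r₀, DifferentiableAt ℝ (deriv N) r)
    (hNpos : ∀ r ∈ Set.Ioi r₀, N r > 0)
    (hode : ∀ r ∈ Set.Ioi r₀,
      N r * deriv (deriv N) r + 2 * N r * deriv N r / r + deriv N r ^ 2 = 0)
    (hinfty : Tendsto N atTop (𝓝 1))
    (hbdry : Tendsto N (𝓝[>] r₀) (𝓝 (Real.sqrt (1 - 2 * m / r₀)))) :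
    ∀ r ∈ Set.Ioi r₀, N r = Real.sqrt (1 - 2 * m / r) := by
  have hr₀pos : 0 < r₀ := lt_trans (by linarith) hr₀
  set v : ℝ → ℝ := fun x => 2 * N x * deriv N x with hv
  -- derivative of u = N²
  have hu : ∀ x ∈ Set.Ioi r₀, HasDerivAt (fun y => N y ^ 2) (v x) x := by
    intro x hx
    have h := (hN x hx).hasDerivAt.pow 2
    refine h.congr_deriv ?_
    rw [show (2:ℕ) - 1 = 1 from rfl]; simp only [hv]; push_cast; ring
  -- derivative of v
  have hv' : ∀ x ∈ Set.Ioi r₀,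
      HasDerivAt v (2 * (deriv N x ^ 2 + N x * deriv (deriv N) x)) x := by
    intro x hx
    have h1 := ((hN x hx).hasDerivAt.mul (hN' x hx).hasDerivAt).const_mul (2 : ℝ)
    have h2 : v = fun y => 2 * (N y * deriv N y) := by
      rw [hv]; funext y; ring
    rw [h2]
    exact h1.congr_deriv (by ring)
  set g : ℝ → ℝ := fun x => x ^ 2 * v x with hg
  -- g has zero derivative
  have hgd : ∀ x ∈ Set.Ioi r₀, HasDerivAt g 0 x := by
    intro x hx
    have hx0 : (0 : ℝ) < x := lt_trans hr₀pos hx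
    have h := (hasDerivAt_pow 2 x).mul (hv' x hx)
    have key : ((2 : ℕ) : ℝ) * x ^ (2 - 1) * v x
        + x ^ 2 * (2 * (deriv N x ^ 2 + N x * deriv (deriv N) x))
        = 2 * x * (x * (N x * deriv (deriv N) x + 2 * N x * deriv N x / x
            + deriv N x ^ 2)) := by
      push_cast
      field_simp [hv]
      ring
    rw [key, hode x hx] at h
    simp only [mul_zero] at h
    exact h
  set c : ℝ := g (r₀ + 1) with hc
  have hmem1 : r₀ + 1 ∈ Set.Ioi r₀ := by simp
  have hgc : ∀ x ∈ Set.Ioi r₀, g x = c :=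
    fun x hx => const_on_Ioi_aux (fun z hz => (hgd z hz).differentiableAt)
      (fun z hz => (hgd z hz).deriv) hx hmem1
  have hvx : ∀ x ∈ Set.Ioi r₀, v x = c / x ^ 2 := by
    intro x hx
    have hx0 : (0 : ℝ) < x := lt_trans hr₀pos hx
    have := hgc x hx
    simp only [hg] at this
    rw [eq_div_iff (by positivity)]
    linarith
  -- h = u + c/x has zero derivative
  set h : ℝ → ℝ := fun y => N y ^ 2 + c / y with hh
  have hhd : ∀ x ∈ Set.Ioi r₀, HasDerivAt h 0 x := by
    intro x hx
    have hx0 : (0 : ℝ) < x := lt_trans hr₀pos hx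
    have h2 : HasDerivAt (fun y : ℝ => c / y) (c * (-(x ^ 2)⁻¹)) x := by
      simpa [div_eq_mul_inv] using (hasDerivAt_inv (ne_of_gt hx0)).const_mul c
    have h3 := (hu x hx).add h2
    have : v x + c * (-(x ^ 2)⁻¹) = 0 := by
      rw [hvx x hx]; field_simp; ring
    rwa [this] at h3
  set A : ℝ := h (r₀ + 1) with hA
  have hux : ∀ x ∈ Set.Ioi r₀, N x ^ 2 = A - c / x := by
    intro x hx
    have := const_on_Ioi_aux (fun z hz => (hhd z hz).differentiableAt)
      (fun z hz => (hhd z hz).deriv) hx hmem1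
    have : N x ^ 2 + c / x = A := this
    linarith
  -- A = 1 from the limit at infinity
  have hA1 : A = 1 := by
    have t1 : Tendsto (fun y => N y ^ 2) atTop (𝓝 1) := by
      simpa using hinfty.pow 2
    have t2 : Tendsto (fun y : ℝ => A - c / y) atTop (𝓝 A) := by
      have hc0 : Tendsto (fun y : ℝ => c / y) atTop (𝓝 0) :=
        tendsto_const_nhds.div_atTop tendsto_id
      simpa using tendsto_const_nhds.sub hc0
    have heq : (fun y => N y ^ 2) =ᶠ[atTop] fun y => A - c / y := by
      filter_upwards [eventually_gt_atTop r₀] with y hy using hux y hy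
    exact (tendsto_nhds_unique (t1.congr' heq) t2).symm
  -- c = 2m from the boundary limit
  have hnn : 0 ≤ 1 - 2 * m / r₀ := by
    have : 2 * m / r₀ < 1 := (div_lt_one hr₀pos).mpr hr₀
    linarith
  have hc2m : c = 2 * m := by
    have t1 : Tendsto (fun y => N y ^ 2) (𝓝[>] r₀) (𝓝 (1 - 2 * m / r₀)) := by
      have := hbdry.pow 2
      rwa [Real.sq_sqrt hnn] at this
    have t2 : Tendsto (fun y : ℝ => A - c / y) (𝓝[>] r₀) (𝓝 (A - c / r₀)) := by
      have : ContinuousAt (fun y : ℝ => A - c / y) r₀ :=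
        continuousAt_const.sub (continuousAt_const.div continuousAt_id (ne_of_gt hr₀pos))
      exact this.continuousWithinAt
    have heq : (fun y => N y ^ 2) =ᶠ[𝓝[>] r₀] fun y => A - c / y := by
      filter_upwards [self_mem_nhdsWithin] with y hy using hux y hy
    have key : 1 - 2 * m / r₀ = A - c / r₀ :=
      tendsto_nhds_unique (t1.congr' heq) t2
    rw [hA1] at key
    field_simp at key
    linarith
  -- conclude
  intro r hr
  have hr0 : (0 : ℝ) < r := lt_trans hr₀pos hr
  have hsq : N r ^ 2 = 1 - 2 * m / r := by
    rw [hux r hr, hA1, hc2m]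
  calc N r = Real.sqrt (N r ^ 2) := (Real.sqrt_sq (hNpos r hr).le).symm
    _ = Real.sqrt (1 - 2 * m / r) := by rw [hsq]
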